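/- The map κ restricted to the auxiliary feasible set Ξ' is a bijection from Ξ' onto the LAS-constrained set Ξ_N(a,c,b): κ maps Ξ' into Ξ_N(a,c,b), is injective on Ξ', and every w ∈ Ξ_N(a,c,b) equals κ(v,z) for exactly one (v,z) ∈ Ξ'. -/

import Mathlib

open Matrix

/-- Support indicator of an exact design. -/
def suppInd {n : ℕ} (w : Fin n → ℕ) : Fin n → ℕ := fun i => if 0 < w i then 1 else 0

/-- The LAS-constrained set of exact designs of size `N`. -/
def XiLAS (n K N : ℕ) (a c : Fin n → Fin K → ℝ) (b : Fin K → ℝ) : Set (Fin n → ℕ) :=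
  {w | (∀ k, (∑ i, a i k * (w i : ℝ)) + (∑ i, c i k * (suppInd w i : ℝ)) ≤ b k) ∧
       (∑ i, w i) = N}

/-- The auxiliary feasible set of auxiliary designs `(v, z)`. -/
def AuxFeas (n K N r : ℕ) (j₀ : Fin r) (a c : Fin n → Fin K → ℝ) (b : Fin K → ℝ) :
    Set ((Fin n × Fin r → ℕ) × (Fin n → ℕ)) :=
  {vz | (∀ i j, vz.1 (i, j) = vz.1 (i, j₀)) ∧
        (∀ i, vz.2 i ≤ 1) ∧
        (∀ i, vz.2 i ≤ vz.1 (i, j₀) ∧ vz.1 (i, j₀) ≤ N * vz.2 i) ∧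
        (∀ k, (∑ i, a i k * (vz.1 (i, j₀) : ℝ)) + (∑ i, c i k * (vz.2 i : ℝ)) ≤ b k) ∧
        (∑ i, vz.1 (i, j₀)) = N}

/-- The conversion map from auxiliary designs to exact designs. -/
def kappa {n r : ℕ} (j₀ : Fin r) (vz : (Fin n × Fin r → ℕ) × (Fin n → ℕ)) : Fin n → ℕ :=
  fun i => vz.1 (i, j₀)

/-- `κ` restricted to the auxiliary feasible set is a bijection onto the
LAS-constrained set. -/
theorem kappa_bijective (n K N r : ℕ) (hr : 1 ≤ r) (j₀ : Fin r)
    (a c : Fin n → Fin K → ℝ) (b : Fin K → ℝ) :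
    (∀ vz ∈ AuxFeas n K N r j₀ a c b, kappa j₀ vz ∈ XiLAS n K N a c b) ∧
    (∀ vz₁ ∈ AuxFeas n K N r j₀ a c b, ∀ vz₂ ∈ AuxFeas n K N r j₀ a c b,
      kappa j₀ vz₁ = kappa j₀ vz₂ → vz₁ = vz₂) ∧
    (∀ w ∈ XiLAS n K N a c b,
      ∃! vz : (Fin n × Fin r → ℕ) × (Fin n → ℕ),
        vz ∈ AuxFeas n K N r j₀ a c b ∧ kappa j₀ vz = w) := by
  -- key: z determined by v
  have hz : ∀ vz ∈ AuxFeas n K N r j₀ a c b, ∀ i,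
      vz.2 i = suppInd (kappa j₀ vz) i := by
    rintro ⟨v, z⟩ ⟨h1, h2, h3, h4, h5⟩ i
    have h2i := h2 i
    have h3i := h3 i
    simp only [suppInd, kappa]
    dsimp only at h2i h3i ⊢
    rcases Nat.eq_zero_or_pos (v (i, j₀)) with h | h
    · simp only [show ¬ (0 < v (i, j₀)) by omega, ↓reduceIte]
      omega
    · simp only [show 0 < v (i, j₀) from h, ↓reduceIte]
      rcases Nat.le_one_iff_eq_zero_or_eq_one.mp h2i with h0 | h1
      · simp [h0] at h3i
        omega
      · exact h1
  have hinj : ∀ vz₁ ∈ AuxFeas n K N r j₀ a c b, ∀ vz₂ ∈ AuxFeas n K N r j₀ a c b,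
      kappa j₀ vz₁ = kappa j₀ vz₂ → vz₁ = vz₂ := by
    rintro ⟨v₁, z₁⟩ h₁ ⟨v₂, z₂⟩ h₂ hk
    have hv : v₁ = v₂ := by
      funext p
      have e1 := h₁.1 p.1 p.2
      have e2 := h₂.1 p.1 p.2
      have e3 := congrFun hk p.1
      simp only [kappa] at e3
      dsimp only at e1 e2
      rw [show p = (p.1, p.2) from rfl, e1, e2, e3]
    have hzz : z₁ = z₂ := by
      funext i
      exact (hz _ h₁ i).trans (by rw [hk]; exact (hz _ h₂ i).symm)
    rw [hv, hzz]
  refine ⟨?_, hinj, ?_⟩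
  · rintro ⟨v, z⟩ hvz
    obtain ⟨h1, h2, h3, h4, h5⟩ := hvz
    refine ⟨fun k => ?_, h5⟩
    have hsum : (∑ i, c i k * ((suppInd (kappa j₀ (v, z)) i : ℕ) : ℝ))
        = ∑ i, c i k * ((z i : ℕ) : ℝ) :=
      Finset.sum_congr rfl fun i _ => by
        rw [← hz (v, z) ⟨h1, h2, h3, h4, h5⟩ i]
    rw [hsum]
    exact h4 k
  · intro w hw
    obtain ⟨hw1, hw2⟩ := hw
    have hwN : ∀ i, w i ≤ N := by
      intro i
      rw [← hw2]
      exact Finset.single_le_sum (fun i _ => Nat.zero_le _) (Finset.mem_univ i)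
    have hmem : (⟨fun p => w p.1, suppInd w⟩ : (Fin n × Fin r → ℕ) × (Fin n → ℕ))
        ∈ AuxFeas n K N r j₀ a c b := by
      refine ⟨fun i j => rfl, fun i => ?_, fun i => ?_, hw1, hw2⟩
      · simp only [suppInd]; split <;> omega
      · have hN := hwN i
        constructor <;> simp only [suppInd] <;> split <;> omega
    refine ⟨_, ⟨hmem, rfl⟩, ?_⟩
    rintro vz' ⟨hvz', hk⟩
    exact hinj _ hvz' _ hmem hk
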